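/- Let (X,μ) be a non-atomic probability space, T an ergodic automorphism of (X,μ), and φ : X → ℝ integrable. Then the pair (T,φ) is recurrent if and only if ∫ φ dμ = 0, where (T,φ) is recurrent means: for every measurable set A with μ(A) > 0 and every ε > 0 there exists n > 0 such that μ(A ∩ T^{−n}(A) ∩ {x : |∑_{i=0}^{n−1} φ(T^i(x))| < ε}) > 0. -/

import Mathlib

open Filter Topology MeasureTheory

namespace AtkinsonAux

set_option linter.unusedSectionVars false

variable {X : Type*} [MeasurableSpace X] {μ : MeasureTheory.Measure X}

/-- Running maximum of Birkhoff sums: `maxS T g n x = max (0, S_1 x, ..., S_n x)`. -/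
noncomputable def maxS (T : X → X) (g : X → ℝ) : ℕ → X → ℝ
  | 0 => fun _ => 0
  | n + 1 => fun x => max (maxS T g n x) (birkhoffSum T g (n + 1) x)

variable {T : X → X} {g : X → ℝ}

lemma maxS_succ (n : ℕ) (x : X) :
    maxS T g (n + 1) x = max (maxS T g n x) (birkhoffSum T g (n + 1) x) := rfl

lemma maxS_nonneg (n : ℕ) (x : X) : 0 ≤ maxS T g n x := by
  induction n with
  | zero => exact le_refl 0
  | succ n ih => exact le_trans ih (le_max_left _ _)

lemma maxS_mono {m n : ℕ} (h : m ≤ n) (x : X) : maxS T g m x ≤ maxS T g n x := by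
  induction n with
  | zero => simp_all
  | succ n ih =>
    rcases Nat.lt_or_ge m (n + 1) with h' | h'
    · exact le_trans (ih (Nat.lt_succ_iff.mp h')) (le_max_left _ _)
    · have : m = n + 1 := le_antisymm h h'
      simp [this]

lemma birkhoffSum_le_maxS (n : ℕ) (x : X) : birkhoffSum T g n x ≤ maxS T g n x := by
  cases n with
  | zero => simp [maxS, birkhoffSum_zero]
  | succ n => exact le_max_right _ _

lemma maxS_key (n : ℕ) (x : X) :
    maxS T g (n + 1) x ≤ max 0 (g x + maxS T g n (T x)) := by
  induction n with
  | zero =>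
    simp only [maxS, birkhoffSum_one, max_le_iff]
    constructor
    · exact le_max_left _ _
    · exact le_max_of_le_right (le_refl _)
  | succ n ih =>
    rw [maxS_succ]
    refine max_le (le_trans ih ?_) ?_
    · exact max_le_max (le_refl 0) (by
        have := maxS_mono (T := T) (g := g) (Nat.le_succ n) (T x); linarith)
    · have h1 : birkhoffSum T g (n + 2) x = g x + birkhoffSum T g (n + 1) (T x) :=
        birkhoffSum_succ' T g (n + 1) x
      have h2 := birkhoffSum_le_maxS (T := T) (g := g) (n + 1) (T x)
      calc birkhoffSum T g (n + 2) x ≤ g x + maxS T g (n + 1) (T x) := by rw [h1]; linarith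
        _ ≤ max 0 (g x + maxS T g (n + 1) (T x)) := le_max_right _ _

lemma measurable_birkhoffSum (hT : Measurable T) (hg : Measurable g) (n : ℕ) :
    Measurable (fun x => birkhoffSum T g n x) := by
  unfold birkhoffSum
  exact Finset.measurable_sum _ (fun i _ => hg.comp (hT.iterate i))

lemma measurable_maxS (hT : Measurable T) (hg : Measurable g) (n : ℕ) :
    Measurable (maxS T g n) := by
  induction n with
  | zero => exact measurable_const
  | succ n ih => exact ih.max (measurable_birkhoffSum hT hg (n + 1))

lemma integrable_birkhoffSum (hTpres : MeasurePreserving T μ μ) (hg : Integrable g μ) (n : ℕ) :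
    Integrable (fun x => birkhoffSum T g n x) μ := by
  unfold birkhoffSum
  refine integrable_finset_sum _ (fun i _ => ?_)
  exact ((hTpres.iterate i).integrable_comp hg.aestronglyMeasurable).mpr hg

lemma integrable_maxS (hTpres : MeasurePreserving T μ μ) (hg : Integrable g μ) (n : ℕ) :
    Integrable (maxS T g n) μ := by
  induction n with
  | zero => simpa [maxS] using (integrable_const (0 : ℝ) (μ := μ))
  | succ n ih =>
    have := ih.sup (integrable_birkhoffSum hTpres hg (n + 1))
    exact this.congr (by filter_upwards with x; rfl)

/-- Hopf's maximal ergodic lemma (Garsia's proof). -/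
lemma hopf_max (hT : Measurable T) (hTemb : MeasurableEmbedding T)
    (hTpres : MeasurePreserving T μ μ) (hgm : Measurable g) (hg : Integrable g μ) (n : ℕ) :
    0 ≤ ∫ x in {x | 0 < maxS T g n x}, g x ∂μ := by
  cases n with
  | zero =>
    have : {x | 0 < maxS T g 0 x} = (∅ : Set X) := by
      ext x; simp [maxS]
    simp [this]
  | succ n =>
    set E : Set X := {x | 0 < maxS T g (n + 1) x} with hE
    have hEm : MeasurableSet E := measurableSet_lt measurable_const (measurable_maxS hT hgm _)
    have h1 : Integrable (maxS T g (n + 1)) μ := integrable_maxS hTpres hg _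
    have h2 : Integrable (fun x => maxS T g (n + 1) (T x)) μ :=
      (hTpres.integrable_comp h1.aestronglyMeasurable).mpr h1
    have hpt : ∀ x, maxS T g (n + 1) x - maxS T g (n + 1) (T x) ≤ E.indicator g x := by
      intro x
      by_cases hx : x ∈ E
      · rw [Set.indicator_of_mem hx]
        have hkey := maxS_key (T := T) (g := g) n x
        have hxpos : 0 < maxS T g (n + 1) x := hx
        have : maxS T g (n + 1) x ≤ g x + maxS T g n (T x) := by
          rcases le_max_iff.mp hkey with h | h
          · linarith
          · exact h
        have := maxS_mono (T := T) (g := g) (Nat.le_succ n) (T x)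
        linarith
      · rw [Set.indicator_of_notMem hx]
        have hle : maxS T g (n + 1) x ≤ 0 := not_lt.mp hx
        have := maxS_nonneg (T := T) (g := g) (n + 1) (T x)
        linarith
    have hzero : ∫ x, (maxS T g (n + 1) x - maxS T g (n + 1) (T x)) ∂μ = 0 := by
      rw [integral_sub h1 h2]
      rw [hTpres.integral_comp hTemb (maxS T g (n + 1))]
      ring
    have hmono : ∫ x, (maxS T g (n + 1) x - maxS T g (n + 1) (T x)) ∂μ
        ≤ ∫ x, E.indicator g x ∂μ :=
      integral_mono (h1.sub h2) (hg.indicator hEm) hpt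
    rw [hzero, integral_indicator hEm] at hmono
    exact hmono

/-- If almost every point has some positive Birkhoff sum, the integral is nonnegative. -/
lemma hopf_full (hT : Measurable T) (hTemb : MeasurableEmbedding T)
    (hTpres : MeasurePreserving T μ μ) (hgm : Measurable g) (hg : Integrable g μ)
    (h : ∀ᵐ x ∂μ, ∃ n : ℕ, 0 < birkhoffSum T g (n + 1) x) :
    0 ≤ ∫ x, g x ∂μ := by
  set E : ℕ → Set X := fun n => {x | 0 < maxS T g n x} with hEdef
  have hEm : ∀ n, MeasurableSet (E n) :=
    fun n => measurableSet_lt measurable_const (measurable_maxS hT hgm _)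
  have hmono : Monotone E := by
    intro m n hmn x hx
    exact lt_of_lt_of_le hx (maxS_mono hmn x)
  have hU : MeasurableSet (⋃ n, E n) := MeasurableSet.iUnion hEm
  have hae : ∀ᵐ x ∂μ, x ∈ ⋃ n, E n := by
    filter_upwards [h] with x ⟨n, hn⟩
    exact Set.mem_iUnion.mpr ⟨n + 1, lt_of_lt_of_le hn (birkhoffSum_le_maxS _ _)⟩
  have hcompl : μ (⋃ n, E n)ᶜ = 0 := by
    rw [measure_eq_zero_iff_ae_notMem]
    filter_upwards [hae] with x hx
    simpa using hx
  have htend : Tendsto (fun n => ∫ x in E n, g x ∂μ) atTop (𝓝 (∫ x in ⋃ n, E n, g x ∂μ)) :=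
    tendsto_setIntegral_of_monotone hEm hmono hg.integrableOn
  have hterm : ∀ n, 0 ≤ ∫ x in E n, g x ∂μ := fun n => hopf_max hT hTemb hTpres hgm hg n
  have hlim : 0 ≤ ∫ x in ⋃ n, E n, g x ∂μ := ge_of_tendsto' htend hterm
  have : ∫ x in ⋃ n, E n, g x ∂μ + ∫ x in (⋃ n, E n)ᶜ, g x ∂μ = ∫ x, g x ∂μ :=
    integral_add_compl hU hg
  have hz : ∫ x in (⋃ n, E n)ᶜ, g x ∂μ = 0 := by
    rw [Measure.restrict_eq_zero.mpr hcompl]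
    exact integral_zero_measure _
  linarith

/-- If the integral is positive, the set where all Birkhoff sums are positive has
positive measure. -/
lemma pos_birkhoff_set (hT : Measurable T) (hTemb : MeasurableEmbedding T)
    (hTpres : MeasurePreserving T μ μ) [IsProbabilityMeasure μ]
    (hgm : Measurable g) (hg : Integrable g μ) (hc : 0 < ∫ x, g x ∂μ) :
    0 < μ {x | ∀ n : ℕ, 0 < birkhoffSum T g (n + 1) x} := by
  by_contra hcon
  push_neg at hcon
  have hD0 : μ {x | ∀ n : ℕ, 0 < birkhoffSum T g (n + 1) x} = 0 := le_antisymm hcon bot_le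
  set c := ∫ x, g x ∂μ with hcdef
  set g' : X → ℝ := fun x => c / 2 - g x with hg'def
  have hg'm : Measurable g' := measurable_const.sub hgm
  have hg'i : Integrable g' μ := (integrable_const _).sub hg
  have hsum : ∀ n x, birkhoffSum T g' n x = n * (c / 2) - birkhoffSum T g n x := by
    intro n x
    simp only [hg'def, birkhoffSum, Finset.sum_sub_distrib, Finset.sum_const,
      Finset.card_range, nsmul_eq_mul]
  have hae : ∀ᵐ x ∂μ, ∃ n : ℕ, 0 < birkhoffSum T g' (n + 1) x := by
    have : ∀ᵐ x ∂μ, x ∉ {x | ∀ n : ℕ, 0 < birkhoffSum T g (n + 1) x} :=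
      measure_eq_zero_iff_ae_notMem.mp hD0
    filter_upwards [this] with x hx
    simp only [Set.mem_setOf_eq, not_forall, not_lt] at hx
    obtain ⟨n, hn⟩ := hx
    refine ⟨n, ?_⟩
    rw [hsum]
    have : (0 : ℝ) < (n + 1 : ℕ) * (c / 2) := by
      have : (0:ℝ) < (n + 1 : ℕ) := by positivity
      positivity
    linarith
  have := hopf_full hT hTemb hTpres hg'm hg'i hae
  have : ∫ x, g' x ∂μ = c / 2 - c := by
    rw [hg'def]
    rw [integral_sub (integrable_const _) hg]
    simp [hcdef]
  linarith [hopf_full hT hTemb hTpres hg'm hg'i hae]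

/-- The set of points whose Birkhoff sums frequently exceed the linear rate `r`. -/
def wSet (T : X → X) (g : X → ℝ) (r : ℝ) : Set X :=
  {x | ∀ m : ℕ, ∃ n : ℕ, m ≤ n ∧ r * n ≤ birkhoffSum T g n x}

lemma measurable_wSet (hT : Measurable T) (hgm : Measurable g) (r : ℝ) :
    MeasurableSet (wSet T g r) := by
  have : wSet T g r = ⋂ m : ℕ, ⋃ n : ℕ, ⋃ _ : m ≤ n, {x | r * n ≤ birkhoffSum T g n x} := by
    ext x
    simp [wSet, Set.mem_iInter, Set.mem_iUnion]
  rw [this]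
  exact MeasurableSet.iInter fun m => MeasurableSet.iUnion fun n =>
    MeasurableSet.iUnion fun _ =>
      measurableSet_le measurable_const (measurable_birkhoffSum hT hgm n)

lemma wSet_anti {r r' : ℝ} (h : r ≤ r') : wSet T g r' ⊆ wSet T g r := by
  intro x hx m
  obtain ⟨n, hn, hS⟩ := hx m
  exact ⟨n, hn, le_trans (mul_le_mul_of_nonneg_right h (Nat.cast_nonneg n)) hS⟩

lemma wSet_step_a {r r' : ℝ} (h : r < r') {x : X} (hx : x ∈ wSet T g r') :
    T x ∈ wSet T g r := by
  intro m
  obtain ⟨n', hn', hS⟩ := hx (max (m + 1) ⌈(g x - r) / (r' - r)⌉₊)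
  have hn'1 : 1 ≤ n' := le_trans (le_trans (Nat.le_add_left 1 m) (le_max_left _ _)) hn'
  refine ⟨n' - 1, ?_, ?_⟩
  · omega
  · have hrr' : (0:ℝ) < r' - r := by linarith
    have hceil : g x - r ≤ (r' - r) * n' := by
      rcases le_or_gt (g x - r) 0 with hc | hc
      · exact le_trans hc (by positivity)
      · have h1 : (g x - r) / (r' - r) ≤ (⌈(g x - r) / (r' - r)⌉₊ : ℝ) := Nat.le_ceil _
        have h2 : (⌈(g x - r) / (r' - r)⌉₊ : ℝ) ≤ (n' : ℝ) := by
          exact_mod_cast le_trans (le_max_right _ _) hn'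
        calc g x - r = ((g x - r) / (r' - r)) * (r' - r) := by field_simp
          _ ≤ (n' : ℝ) * (r' - r) := by
            apply mul_le_mul_of_nonneg_right (le_trans h1 h2) (le_of_lt hrr')
          _ = (r' - r) * n' := by ring
    obtain ⟨k, rfl⟩ : ∃ k, n' = k + 1 := ⟨n' - 1, by omega⟩
    have hsucc : birkhoffSum T g (k + 1) x = g x + birkhoffSum T g k (T x) :=
      birkhoffSum_succ' T g k x
    have hS' : r' * ((k:ℝ) + 1) ≤ g x + birkhoffSum T g k (T x) := by
      rw [← hsucc]; exact_mod_cast hS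
    have hceil' : g x - r ≤ (r' - r) * ((k:ℝ) + 1) := by exact_mod_cast hceil
    have hgoal : r * ((k + 1 - 1 : ℕ) : ℝ) ≤ birkhoffSum T g (k + 1 - 1) (T x) := by
      simp only [Nat.add_sub_cancel]
      nlinarith
    exact hgoal

lemma wSet_step_b {r r' : ℝ} (h : r < r') {x : X} (hx : T x ∈ wSet T g r') :
    x ∈ wSet T g r := by
  intro m
  obtain ⟨n', hn', hS⟩ := hx (max m ⌈(r - g x) / (r' - r)⌉₊)
  have hm : m ≤ n' := le_trans (le_max_left _ _) hn'
  refine ⟨n' + 1, by omega, ?_⟩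
  · have hrr' : (0:ℝ) < r' - r := by linarith
    have hceil : r - g x ≤ (r' - r) * n' := by
      rcases le_or_gt (r - g x) 0 with hc | hc
      · exact le_trans hc (by positivity)
      · have h1 : (r - g x) / (r' - r) ≤ (⌈(r - g x) / (r' - r)⌉₊ : ℝ) := Nat.le_ceil _
        have h2 : (⌈(r - g x) / (r' - r)⌉₊ : ℝ) ≤ (n' : ℝ) := by
          exact_mod_cast le_trans (le_max_right _ _) hn'
        calc r - g x = ((r - g x) / (r' - r)) * (r' - r) := by field_simp
          _ ≤ (n' : ℝ) * (r' - r) := by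
            apply mul_le_mul_of_nonneg_right (le_trans h1 h2) (le_of_lt hrr')
          _ = (r' - r) * n' := by ring
    rw [birkhoffSum_succ']
    push_cast
    nlinarith [hS, hceil]

/-- Under ergodicity and zero mean, almost no point has Birkhoff sums frequently
exceeding a positive linear rate. -/
lemma freq_zero (hT : Measurable T) (hTemb : MeasurableEmbedding T)
    (hTpres : MeasurePreserving T μ μ) (hTerg : Ergodic T μ) [IsProbabilityMeasure μ]
    (hgm : Measurable g) (hg : Integrable g μ) (hint : ∫ x, g x ∂μ = 0)
    {δ : ℝ} (hδ : 0 < δ) : μ (wSet T g δ) = 0 := by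
  set V : Set X := ⋂ k : ℕ, wSet T g (δ - δ / (k + 1)) with hVdef
  have hVm : MeasurableSet V := MeasurableSet.iInter fun k => measurable_wSet hT hgm _
  have hlt : ∀ k : ℕ, δ - δ / (k + 1) < δ - δ / (k + 2) := by
    intro k
    have : δ / (k + 2) < δ / (k + 1) := by
      apply div_lt_div_of_pos_left hδ (by positivity)
      push_cast; linarith
    linarith
  have hWV : wSet T g δ ⊆ V := by
    refine Set.subset_iInter fun k => wSet_anti ?_
    have : 0 < δ / ((k : ℝ) + 1) := by positivity
    linarith
  have hinv : T ⁻¹' V = V := by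
    ext x
    simp only [Set.mem_preimage, hVdef, Set.mem_iInter]
    have hcast : ∀ k : ℕ, δ - δ / ((k + 1 : ℕ) : ℝ) - 0 = δ - δ / ((k : ℝ) + 1) := by
      intro k; push_cast; ring
    constructor
    · intro hx k
      have hx' := hx (k + 1)
      have heq : δ - δ / (((k + 1 : ℕ) : ℝ) + 1) = δ - δ / ((k : ℝ) + 2) := by
        push_cast; ring_nf
      rw [heq] at hx'
      exact wSet_step_b (hlt k) hx'
    · intro hx k
      have hx' := hx (k + 1)
      have heq : δ - δ / (((k + 1 : ℕ) : ℝ) + 1) = δ - δ / ((k : ℝ) + 2) := by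
        push_cast; ring_nf
      rw [heq] at hx'
      exact wSet_step_a (hlt k) hx'
  rcases hTerg.toPreErgodic.prob_eq_zero_or_one hVm hinv with h0 | h1
  · exact le_antisymm (le_trans (measure_mono hWV) (le_of_eq h0)) bot_le
  · exfalso
    have haeV : ∀ᵐ x ∂μ, x ∈ V := by
      have : μ Vᶜ = 0 := by
        rw [measure_compl hVm (measure_ne_top μ V), h1]
        simp
      rw [measure_eq_zero_iff_ae_notMem] at this
      filter_upwards [this] with x hx
      simpa using hx
    set g' : X → ℝ := fun x => g x - δ / 4 with hg'def
    have hg'm : Measurable g' := hgm.sub measurable_const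
    have hg'i : Integrable g' μ := hg.sub (integrable_const _)
    have hsum : ∀ n x, birkhoffSum T g' n x = birkhoffSum T g n x - n * (δ / 4) := by
      intro n x
      simp only [hg'def, birkhoffSum, Finset.sum_sub_distrib, Finset.sum_const,
        Finset.card_range, nsmul_eq_mul]
    have hae : ∀ᵐ x ∂μ, ∃ n : ℕ, 0 < birkhoffSum T g' (n + 1) x := by
      filter_upwards [haeV] with x hx
      have hx1 : x ∈ wSet T g (δ - δ / (1 + 1)) := by
        have := Set.mem_iInter.mp hx 1
        exact_mod_cast this
      obtain ⟨n, hn1, hS⟩ := hx1 1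
      have hn' : 1 ≤ n := hn1
      refine ⟨n - 1, ?_⟩
      have hne : n - 1 + 1 = n := by omega
      rw [hne, hsum]
      have h2 : δ - δ / (1 + 1) = δ / 2 := by ring
      rw [h2] at hS
      have hncast : (1:ℝ) ≤ (n:ℝ) := by exact_mod_cast hn'
      nlinarith
    have h0 := hopf_full hT hTemb hTpres hg'm hg'i hae
    have : ∫ x, g' x ∂μ = -(δ / 4) := by
      rw [hg'def, integral_sub hg (integrable_const _), hint]
      simp
    linarith

/-- A finite family of reals, pairwise `ε`-separated and bounded by `B` in absolute
value, has at most `2B/ε + 3` members. -/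
lemma card_le_of_sep (s : Finset ℕ) (f : ℕ → ℝ) {ε B : ℝ} (hε : 0 < ε) (hB : 0 ≤ B)
    (hbound : ∀ i ∈ s, |f i| ≤ B)
    (hsep : ∀ i ∈ s, ∀ j ∈ s, i ≠ j → ε ≤ |f i - f j|) :
    (s.card : ℝ) ≤ 2 * B / ε + 3 := by
  set L : ℤ := ⌈B / ε⌉ with hLdef
  have hL0 : 0 ≤ L := Int.ceil_nonneg (by positivity)
  have hmaps : ∀ i ∈ s, ⌊f i / ε⌋ ∈ Finset.Icc (-L) L := by
    intro i hi
    have habs : |f i| ≤ B := hbound i hi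
    have hup : f i / ε ≤ B / ε := by
      apply (div_le_div_iff_of_pos_right hε).mpr
      exact le_trans (le_abs_self _) habs
    have hdown : -(B / ε) ≤ f i / ε := by
      rw [← neg_div]
      apply (div_le_div_iff_of_pos_right hε).mpr
      have : -B ≤ f i := neg_le_of_abs_le habs
      linarith
    rw [Finset.mem_Icc]
    constructor
    · rw [Int.le_floor]
      calc ((-L : ℤ) : ℝ) = -(L : ℝ) := by push_cast; ring
        _ ≤ -(B / ε) := by have := Int.le_ceil (B / ε); simp [hLdef]; linarith
        _ ≤ f i / ε := hdown
    · have : (⌊f i / ε⌋ : ℝ) ≤ (L : ℝ) :=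
        le_trans (Int.floor_le _) (le_trans hup (Int.le_ceil _))
      exact_mod_cast this
  have hinj : Set.InjOn (fun i => ⌊f i / ε⌋) s := by
    intro i hi j hj hij
    by_contra hne
    have hsep' := hsep i hi j hj hne
    have e1 : (⌊f i / ε⌋ : ℝ) ≤ f i / ε := Int.floor_le _
    have e2 : f i / ε < ⌊f i / ε⌋ + 1 := Int.lt_floor_add_one _
    have e3 : (⌊f j / ε⌋ : ℝ) ≤ f j / ε := Int.floor_le _
    have e4 : f j / ε < ⌊f j / ε⌋ + 1 := Int.lt_floor_add_one _
    have heq : (⌊f i / ε⌋ : ℝ) = (⌊f j / ε⌋ : ℝ) := by exact_mod_cast hij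
    have hlt : |f i / ε - f j / ε| < 1 := by
      rw [abs_sub_lt_iff]; constructor <;> linarith
    have hfe : |f i - f j| < ε := by
      have : f i - f j = (f i / ε - f j / ε) * ε := by field_simp
      rw [this, abs_mul, abs_of_pos hε]
      calc |f i / ε - f j / ε| * ε < 1 * ε := by
            exact mul_lt_mul_of_pos_right hlt hε
        _ = ε := one_mul ε
    linarith
  have hcard : s.card ≤ (Finset.Icc (-L) L).card :=
    Finset.card_le_card_of_injOn _ hmaps hinj
  have hIcc : ((Finset.Icc (-L) L).card : ℝ) = 2 * (L : ℝ) + 1 := by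
    rw [Int.card_Icc]
    have : (L + 1 - (-L)) = 2 * L + 1 := by ring
    rw [this]
    have h2 : (0:ℤ) ≤ 2 * L + 1 := by omega
    have h3 : ((2 * L + 1).toNat : ℤ) = 2 * L + 1 := Int.toNat_of_nonneg h2
    have h4 : (((2 * L + 1).toNat : ℤ) : ℝ) = 2 * (L:ℝ) + 1 := by rw [h3]; push_cast; ring
    rw [← h4]
    norm_cast
  have hceil : (L : ℝ) ≤ B / ε + 1 := le_of_lt (Int.ceil_lt_add_one _)
  calc (s.card : ℝ) ≤ ((Finset.Icc (-L) L).card : ℝ) := by exact_mod_cast hcard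
    _ = 2 * (L : ℝ) + 1 := hIcc
    _ ≤ 2 * (B / ε + 1) + 1 := by linarith
    _ = 2 * B / ε + 3 := by ring

/-- Forward direction: recurrence of the pair implies the integral is nonpositive. -/
lemma integral_nonpos_of_recurrent {X : Type*} [MeasurableSpace X]
    (μ : MeasureTheory.Measure X) [IsProbabilityMeasure μ]
    (e : X ≃ᵐ X) (hTpres : MeasurePreserving e μ μ)
    (φ : X → ℝ) (hφ : Integrable φ μ)
    (hrec : ∀ A : Set X, MeasurableSet A → 0 < μ A → ∀ ε : ℝ, 0 < ε → ∃ n : ℕ, 0 < n ∧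
        0 < μ (A ∩ (⇑e)^[n] ⁻¹' A ∩ {x | |∑ i ∈ Finset.range n, φ ((⇑e)^[i] x)| < ε})) :
    ∫ x, φ x ∂μ ≤ 0 := by
  by_contra hcon
  push_neg at hcon
  set c := ∫ x, φ x ∂μ with hcdef
  obtain ⟨g, hgm, hgφ⟩ : ∃ g : X → ℝ, Measurable g ∧ φ =ᵐ[μ] g := by
    have h := hφ.aestronglyMeasurable
    exact ⟨h.mk φ, h.stronglyMeasurable_mk.measurable, h.ae_eq_mk⟩
  have hgint : Integrable g μ := hφ.congr hgφ
  have hgc : ∫ x, g x ∂μ = c := (integral_congr_ae hgφ).symm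
  set ψ : X → ℝ := fun x => g x - c / 2 with hψdef
  have hψm : Measurable ψ := hgm.sub measurable_const
  have hψi : Integrable ψ μ := hgint.sub (integrable_const _)
  have hψint : ∫ x, ψ x ∂μ = c / 2 := by
    rw [hψdef, integral_sub hgint (integrable_const _), hgc]
    simp
    ring
  have hψc : 0 < ∫ x, ψ x ∂μ := by rw [hψint]; linarith
  set D : Set X := {x | ∀ n : ℕ, 0 < birkhoffSum (⇑e) ψ (n + 1) x} with hDdef
  have hDm : MeasurableSet D := by
    have : D = ⋂ n : ℕ, {x | 0 < birkhoffSum (⇑e) ψ (n + 1) x} := by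
      ext x; simp [hDdef, Set.mem_iInter]
    rw [this]
    exact MeasurableSet.iInter fun n =>
      measurableSet_lt measurable_const (measurable_birkhoffSum e.measurable hψm _)
  have hDpos : 0 < μ D :=
    pos_birkhoff_set e.measurable e.measurableEmbedding hTpres hψm hψi hψc
  obtain ⟨n, hn, hpos⟩ := hrec D hDm hDpos (c / 2) (by linarith)
  set Z : Set X := ⋃ i : ℕ, (⇑e)^[i] ⁻¹' {y | φ y ≠ g y} with hZdef
  have hZ0 : μ Z = 0 := by
    refine measure_iUnion_null fun i => ?_
    have h0 : μ {y | φ y ≠ g y} = 0 := hgφ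
    exact ((hTpres.iterate i).quasiMeasurePreserving).preimage_null h0
  have hsub : D ∩ (⇑e)^[n] ⁻¹' D ∩ {x | |∑ i ∈ Finset.range n, φ ((⇑e)^[i] x)| < c / 2}
      ⊆ Z := by
    intro x hx
    by_contra hxZ
    obtain ⟨⟨hxD, -⟩, hxlt⟩ := hx
    have hxeq : ∀ i : ℕ, φ ((⇑e)^[i] x) = g ((⇑e)^[i] x) := by
      intro i
      by_contra hne
      exact hxZ (Set.mem_iUnion.mpr ⟨i, hne⟩)
    have hsum : ∑ i ∈ Finset.range n, φ ((⇑e)^[i] x) = birkhoffSum (⇑e) g n x :=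
      Finset.sum_congr rfl fun i _ => hxeq i
    have hψsum : birkhoffSum (⇑e) ψ n x = birkhoffSum (⇑e) g n x - n * (c / 2) := by
      simp only [hψdef, birkhoffSum, Finset.sum_sub_distrib, Finset.sum_const,
        Finset.card_range, nsmul_eq_mul]
    obtain ⟨m, rfl⟩ : ∃ m, n = m + 1 := ⟨n - 1, by omega⟩
    have hDx : 0 < birkhoffSum (⇑e) ψ (m + 1) x := hxD m
    have hcast : (1:ℝ) ≤ ((m + 1 : ℕ) : ℝ) := by push_cast; linarith [Nat.cast_nonneg (α := ℝ) m]
    have hglb : c / 2 < birkhoffSum (⇑e) g (m + 1) x := by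
      rw [hψsum] at hDx
      nlinarith
    rw [Set.mem_setOf_eq, hsum] at hxlt
    have := le_abs_self (birkhoffSum (⇑e) g (m + 1) x)
    linarith
  have : μ (D ∩ (⇑e)^[n] ⁻¹' D ∩ {x | |∑ i ∈ Finset.range n, φ ((⇑e)^[i] x)| < c / 2}) = 0 :=
    measure_mono_null hsub hZ0
  rw [this] at hpos
  exact lt_irrefl 0 hpos

/-- Reverse direction: zero integral implies recurrence of the pair. -/
lemma recurrent_of_integral_zero {X : Type*} [MeasurableSpace X]
    (μ : MeasureTheory.Measure X) [IsProbabilityMeasure μ]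
    (e : X ≃ᵐ X) (hTpres : MeasurePreserving e μ μ) (hT : Ergodic (⇑e) μ)
    (φ : X → ℝ) (hφ : Integrable φ μ) (hzero : ∫ x, φ x ∂μ = 0)
    (A : Set X) (hA : MeasurableSet A) (hA0 : 0 < μ A) (ε : ℝ) (hε : 0 < ε) :
    ∃ n : ℕ, 0 < n ∧ 0 < μ (A ∩ (⇑e)^[n] ⁻¹' A ∩
      {x | |∑ i ∈ Finset.range n, φ ((⇑e)^[i] x)| < ε}) := by
  classical
  by_contra hcon
  push_neg at hcon
  have hnull : ∀ n : ℕ, μ (A ∩ (⇑e)^[n + 1] ⁻¹' A ∩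
      {x | |∑ i ∈ Finset.range (n + 1), φ ((⇑e)^[i] x)| < ε}) = 0 :=
    fun n => le_antisymm (hcon (n + 1) (Nat.succ_pos n)) bot_le
  obtain ⟨g, hgm, hgφ⟩ : ∃ g : X → ℝ, Measurable g ∧ φ =ᵐ[μ] g := by
    have h := hφ.aestronglyMeasurable
    exact ⟨h.mk φ, h.stronglyMeasurable_mk.measurable, h.ae_eq_mk⟩
  have hgint : Integrable g μ := hφ.congr hgφ
  have hgzero : ∫ x, g x ∂μ = 0 := (integral_congr_ae hgφ).symm.trans hzero
  have hneg : ∀ (n : ℕ) (y : X), birkhoffSum (⇑e) (fun z => -g z) n y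
      = -birkhoffSum (⇑e) g n y := by
    intro n y; simp [birkhoffSum, Finset.sum_neg_distrib]
  -- the null set where φ and g differ along the orbit
  set Z : Set X := ⋃ i : ℕ, (⇑e)^[i] ⁻¹' {y | φ y ≠ g y} with hZdef
  have hZ0 : μ Z = 0 := by
    refine measure_iUnion_null fun i => ?_
    exact ((hTpres.iterate i).quasiMeasurePreserving).preimage_null hgφ
  -- the null recurrence set expressed with g
  set C : Set X := ⋃ n : ℕ, (A ∩ (⇑e)^[n + 1] ⁻¹' A ∩
      {x | |birkhoffSum (⇑e) g (n + 1) x| < ε}) with hCdef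
  have hC0 : μ C = 0 := by
    refine measure_iUnion_null fun n => ?_
    refine measure_mono_null ?_ (measure_union_null (hnull n) hZ0)
    intro x hx
    by_cases hxZ : x ∈ Z
    · exact Or.inr hxZ
    · left
      obtain ⟨hx1, hx2⟩ := hx
      refine ⟨hx1, ?_⟩
      have hxeq : ∀ i : ℕ, φ ((⇑e)^[i] x) = g ((⇑e)^[i] x) := by
        intro i
        by_contra hne
        exact hxZ (Set.mem_iUnion.mpr ⟨i, hne⟩)
      have : ∑ i ∈ Finset.range (n + 1), φ ((⇑e)^[i] x) = birkhoffSum (⇑e) g (n + 1) x :=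
        Finset.sum_congr rfl fun i _ => hxeq i
      rw [Set.mem_setOf_eq, this]
      exact hx2
  -- a.e. the orbit avoids C
  have hae1 : ∀ᵐ x ∂μ, ∀ j : ℕ, (⇑e)^[j] x ∉ C := by
    rw [ae_all_iff]
    intro j
    have h0 : μ ((⇑e)^[j] ⁻¹' C) = 0 :=
      ((hTpres.iterate j).quasiMeasurePreserving).preimage_null hC0
    filter_upwards [measure_eq_zero_iff_ae_notMem.mp h0] with x hx
    exact hx
  -- a.e. sublinearity of Birkhoff sums (positive part)
  have hae2 : ∀ᵐ x ∂μ, ∀ k : ℕ, ∃ m : ℕ, ∀ n, m ≤ n →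
      birkhoffSum (⇑e) g n x < (1 / (k + 1)) * n := by
    rw [ae_all_iff]
    intro k
    have hδ : (0:ℝ) < 1 / ((k:ℝ) + 1) := by positivity
    have h0 := freq_zero e.measurable e.measurableEmbedding hTpres hT hgm hgint hgzero hδ
    filter_upwards [measure_eq_zero_iff_ae_notMem.mp h0] with x hx
    simp only [wSet, Set.mem_setOf_eq, not_forall, not_exists, not_and, not_le] at hx
    obtain ⟨m, hm⟩ := hx
    exact ⟨m, hm⟩
  -- a.e. sublinearity of Birkhoff sums (negative part)
  have hae3 : ∀ᵐ x ∂μ, ∀ k : ℕ, ∃ m : ℕ, ∀ n, m ≤ n →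
      -birkhoffSum (⇑e) g n x < (1 / (k + 1)) * n := by
    rw [ae_all_iff]
    intro k
    have hδ : (0:ℝ) < 1 / ((k:ℝ) + 1) := by positivity
    have h0 := freq_zero e.measurable e.measurableEmbedding hTpres hT hgm.neg hgint.neg
      (by show ∫ x, -g x ∂μ = 0; rw [integral_neg, hgzero]; ring) hδ
    filter_upwards [measure_eq_zero_iff_ae_notMem.mp h0] with x hx
    simp only [wSet, Set.mem_setOf_eq, not_forall, not_exists, not_and, not_le, hneg] at hx
    obtain ⟨m, hm⟩ := hx
    exact ⟨m, fun n hn => by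
      have hmn := hm n hn
      rw [show (-g) = (fun z => -g z) from rfl, hneg] at hmn
      simpa using hmn⟩
  -- a.e. the visit frequency to A tends to zero
  have haeT : ∀ᵐ x ∂μ, Tendsto (fun N : ℕ =>
      ((((Finset.range N).filter (fun i => (⇑e)^[i] x ∈ A)).card : ℝ) / N))
      atTop (𝓝 0) := by
    filter_upwards [hae1, hae2, hae3] with x hx1 hx2 hx3
    -- separation of Birkhoff sums along visits
    have hsepgen : ∀ i j : ℕ, i < j → (⇑e)^[i] x ∈ A → (⇑e)^[j] x ∈ A →
        ε ≤ |birkhoffSum (⇑e) g j x - birkhoffSum (⇑e) g i x| := by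
      intro i j hij hiA hjA
      have hnotC := hx1 i
      have hidx : (j - i - 1) + 1 = j - i := by omega
      have hjeq : (⇑e)^[(j - i - 1) + 1] ((⇑e)^[i] x) = (⇑e)^[j] x := by
        rw [← Function.iterate_add_apply]
        congr 1
        omega
      have hge : ε ≤ |birkhoffSum (⇑e) g ((j - i - 1) + 1) ((⇑e)^[i] x)| := by
        by_contra hlt
        push_neg at hlt
        exact hnotC (Set.mem_iUnion.mpr ⟨j - i - 1,
          ⟨⟨hiA, by rw [Set.mem_preimage, hjeq]; exact hjA⟩, hlt⟩⟩)
      have hadd := birkhoffSum_add (⇑e) g i (j - i) x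
      rw [show i + (j - i) = j by omega] at hadd
      rw [hidx] at hge
      rw [hadd, add_sub_cancel_left]
      exact hge
    rw [tendsto_order]
    constructor
    · intro a ha
      filter_upwards with N
      have : (0:ℝ) ≤ (((Finset.range N).filter (fun i => (⇑e)^[i] x ∈ A)).card : ℝ) / N := by
        positivity
      linarith
    · intro a ha
      obtain ⟨k, hk⟩ := exists_nat_one_div_lt (show (0:ℝ) < ε * a / 4 by positivity)
      set δ : ℝ := 1 / ((k:ℝ) + 1) with hδdef
      have hδpos : 0 < δ := by positivity
      obtain ⟨m2, hm2⟩ := hx2 k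
      obtain ⟨m3, hm3⟩ := hx3 k
      set M : ℕ := max m2 m3 with hMdef
      set C₀ : ℝ := ∑ n ∈ Finset.range M, |birkhoffSum (⇑e) g n x| with hC₀def
      have hC₀ : 0 ≤ C₀ := Finset.sum_nonneg fun _ _ => abs_nonneg _
      have hbound : ∀ N : ℕ, ∀ i, i < N → |birkhoffSum (⇑e) g i x| ≤ C₀ + δ * N := by
        intro N i hiN
        have hδN : 0 ≤ δ * N := by positivity
        rcases lt_or_ge i M with h | h
        · have h1 : |birkhoffSum (⇑e) g i x| ≤ C₀ :=
            Finset.single_le_sum (f := fun n => |birkhoffSum (⇑e) g n x|)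
              (fun _ _ => abs_nonneg _) (Finset.mem_range.mpr h)
          linarith
        · have hu : birkhoffSum (⇑e) g i x < δ * i := hm2 i (le_trans (le_max_left _ _) h)
          have hl : -birkhoffSum (⇑e) g i x < δ * i := hm3 i (le_trans (le_max_right _ _) h)
          have habs : |birkhoffSum (⇑e) g i x| ≤ δ * i :=
            abs_le.mpr ⟨by linarith, by linarith⟩
          have hiN' : (i:ℝ) ≤ (N:ℝ) := by exact_mod_cast le_of_lt hiN
          have : δ * (i:ℝ) ≤ δ * N := mul_le_mul_of_nonneg_left hiN' (le_of_lt hδpos)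
          linarith
      have hcard : ∀ N : ℕ,
          ((((Finset.range N).filter (fun i => (⇑e)^[i] x ∈ A)).card : ℝ))
            ≤ 2 * (C₀ + δ * N) / ε + 3 := by
        intro N
        refine card_le_of_sep _ (fun i => birkhoffSum (⇑e) g i x) hε
          (by positivity) ?_ ?_
        · intro i hi
          exact hbound N i (Finset.mem_range.mp (Finset.mem_filter.mp hi).1)
        · intro i hi j hj hij
          obtain ⟨hi1, hi2⟩ := Finset.mem_filter.mp hi
          obtain ⟨hj1, hj2⟩ := Finset.mem_filter.mp hj
          rcases lt_or_gt_of_ne hij with h | h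
          · rw [abs_sub_comm]
            exact hsepgen i j h hi2 hj2
          · exact hsepgen j i h hj2 hi2
      have hδa : 2 * δ / ε < a / 2 := by
        have hkδ : δ < ε * a / 4 := hk
        rw [div_lt_iff₀ hε]
        nlinarith
      have htends : Tendsto (fun N : ℕ => (2 * C₀ / ε + 3) / N + 2 * δ / ε) atTop
          (𝓝 (0 + 2 * δ / ε)) :=
        (tendsto_const_div_atTop_nhds_zero_nat (2 * C₀ / ε + 3)).add tendsto_const_nhds
      rw [zero_add] at htends
      have hev : ∀ᶠ N : ℕ in atTop, (2 * C₀ / ε + 3) / N + 2 * δ / ε < a :=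
        htends.eventually_lt_const (by linarith)
      filter_upwards [hev, eventually_ge_atTop 1] with N hN hN1
      have hNpos : (0:ℝ) < N := by exact_mod_cast hN1
      have h2 : ((((Finset.range N).filter (fun i => (⇑e)^[i] x ∈ A)).card : ℝ)) / N
          ≤ (2 * (C₀ + δ * N) / ε + 3) / N := by
        exact div_le_div_of_nonneg_right (hcard N) hNpos.le
      have h3 : (2 * (C₀ + δ * N) / ε + 3) / N = (2 * C₀ / ε + 3) / N + 2 * δ / ε := by
        field_simp
        ring
      calc ((((Finset.range N).filter (fun i => (⇑e)^[i] x ∈ A)).card : ℝ)) / N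
          ≤ (2 * (C₀ + δ * N) / ε + 3) / N := h2
        _ = (2 * C₀ / ε + 3) / N + 2 * δ / ε := h3
        _ < a := hN
  -- dominated convergence for the visit frequencies
  set F : ℕ → X → ℝ := fun N x =>
    ((((Finset.range N).filter (fun i => (⇑e)^[i] x ∈ A)).card : ℝ) / N) with hFdef
  have hFeq : ∀ (N : ℕ) (x : X), F N x =
      (∑ i ∈ Finset.range N, Set.indicator ((⇑e)^[i] ⁻¹' A) (fun _ => (1:ℝ)) x) / N := by
    intro N x
    simp only [hFdef, Finset.card_filter, Nat.cast_sum]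
    congr 1
    refine Finset.sum_congr rfl fun i _ => ?_
    by_cases h : (⇑e)^[i] x ∈ A <;> simp [Set.indicator_apply, Set.mem_preimage, h]
  have hApre : ∀ i : ℕ, MeasurableSet ((⇑e)^[i] ⁻¹' A) :=
    fun i => (e.measurable.iterate i) hA
  have hFmeas : ∀ N, AEStronglyMeasurable (F N) μ := by
    intro N
    have : Measurable (F N) := by
      have : F N = fun x =>
          (∑ i ∈ Finset.range N, Set.indicator ((⇑e)^[i] ⁻¹' A) (fun _ => (1:ℝ)) x) / N := by
        funext x; exact hFeq N x
      rw [this]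
      exact (Finset.measurable_sum _
        (fun i _ => measurable_const.indicator (hApre i))).div_const _
    exact this.aestronglyMeasurable
  have hFint : ∀ N : ℕ, 1 ≤ N → ∫ x, F N x ∂μ = (μ A).toReal := by
    intro N hN
    have hre : ∫ x, F N x ∂μ =
        ∫ x, (∑ i ∈ Finset.range N, Set.indicator ((⇑e)^[i] ⁻¹' A) (fun _ => (1:ℝ)) x) / N ∂μ :=
      integral_congr_ae (Filter.Eventually.of_forall fun x => hFeq N x)
    rw [hre, integral_div,
      integral_finset_sum _ (fun i _ => (integrable_const (1:ℝ)).indicator (hApre i))]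
    have heach : ∀ i : ℕ, ∫ x, Set.indicator ((⇑e)^[i] ⁻¹' A) (fun _ => (1:ℝ)) x ∂μ
        = (μ A).toReal := by
      intro i
      rw [integral_indicator_const (1:ℝ) (hApre i), measureReal_def,
        (hTpres.iterate i).measure_preimage hA.nullMeasurableSet]
      simp
    rw [Finset.sum_congr rfl (fun i _ => heach i), Finset.sum_const, Finset.card_range,
      nsmul_eq_mul]
    have hN' : (N:ℝ) ≠ 0 := by positivity
    field_simp
  have hDCT : Tendsto (fun N => ∫ x, F N x ∂μ) atTop (𝓝 0) := by
    have h0 : (0:ℝ) = ∫ _x, (0:ℝ) ∂μ := by simp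
    rw [h0]
    refine tendsto_integral_of_dominated_convergence (fun _ => (1:ℝ)) hFmeas
      (integrable_const 1) ?_ ?_
    · intro N
      filter_upwards with x
      rw [Real.norm_eq_abs, abs_of_nonneg (show (0:ℝ) ≤ F N x from div_nonneg (Nat.cast_nonneg _) (Nat.cast_nonneg _))]
      rcases Nat.eq_zero_or_pos N with rfl | hNpos
      · simp [hFdef]
      · rw [hFdef]
        apply div_le_one_of_le₀
        · have := Finset.card_filter_le (Finset.range N) (fun i => (⇑e)^[i] x ∈ A)
          rw [Finset.card_range] at this
          exact_mod_cast this
        · positivity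
    · filter_upwards [haeT] with x hx
      exact hx
  have hconst : Tendsto (fun _ : ℕ => (μ A).toReal) atTop (𝓝 0) := by
    apply hDCT.congr'
    filter_upwards [eventually_ge_atTop 1] with N hN
    exact hFint N hN
  have h0 : (μ A).toReal = 0 := tendsto_nhds_unique tendsto_const_nhds hconst
  have : μ A = 0 := by
    rcases (ENNReal.toReal_eq_zero_iff _).mp h0 with h | h
    · exact h
    · exact absurd h (measure_ne_top μ A)
  rw [this] at hA0
  exact lt_irrefl 0 hA0

end AtkinsonAux

/-- **Atkinson's Theorem.** Let `(X, μ)` be a non-atomic probability space, `T` an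
ergodic automorphism of `(X, μ)` and `φ : X → ℝ` integrable.  Then the pair `(T, φ)` is
recurrent (for every positive-measure set `A` and every `ε > 0` there is `n > 0` with
`μ(A ∩ T⁻ⁿA ∩ {|S_n φ| < ε}) > 0`) if and only if `∫ φ dμ = 0`. -/
theorem atkinson_theorem {X : Type*} [MeasurableSpace X]
    (μ : Measure X) [IsProbabilityMeasure μ] [NullSingletonClass μ]
    (T : X ≃ᵐ X) (hTpres : MeasurePreserving T μ μ) (hT : Ergodic (⇑T) μ)
    (φ : X → ℝ) (hφ : Integrable φ μ) :
    (∀ A : Set X, MeasurableSet A → 0 < μ A → ∀ ε : ℝ, 0 < ε → ∃ n : ℕ, 0 < n ∧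
        0 < μ (A ∩ (⇑T)^[n] ⁻¹' A ∩
          {x | |∑ i ∈ Finset.range n, φ ((⇑T)^[i] x)| < ε}))
      ↔ ∫ x, φ x ∂μ = 0 := by
  constructor
  · intro hrec
    have h1 : ∫ x, φ x ∂μ ≤ 0 :=
      AtkinsonAux.integral_nonpos_of_recurrent μ T hTpres φ hφ hrec
    have hrecneg : ∀ A : Set X, MeasurableSet A → 0 < μ A → ∀ ε : ℝ, 0 < ε → ∃ n : ℕ, 0 < n ∧
        0 < μ (A ∩ (⇑T)^[n] ⁻¹' A ∩
          {x | |∑ i ∈ Finset.range n, (fun y => -φ y) ((⇑T)^[i] x)| < ε}) := by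
      intro A hA hA0 ε hε
      obtain ⟨n, hn, hpos⟩ := hrec A hA hA0 ε hε
      refine ⟨n, hn, ?_⟩
      have hseteq : {x : X | |∑ i ∈ Finset.range n, (fun y => -φ y) ((⇑T)^[i] x)| < ε}
          = {x : X | |∑ i ∈ Finset.range n, φ ((⇑T)^[i] x)| < ε} := by
        ext x
        simp [Finset.sum_neg_distrib, abs_neg]
      rw [hseteq]
      exact hpos
    have h2 : ∫ x, (fun y => -φ y) x ∂μ ≤ 0 :=
      AtkinsonAux.integral_nonpos_of_recurrent μ T hTpres (fun y => -φ y) hφ.neg hrecneg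
    simp only [integral_neg] at h2
    linarith
  · intro hzero A hA hA0 ε hε
    exact AtkinsonAux.recurrent_of_integral_zero μ T hTpres hT φ hφ hzero A hA hA0 ε hε
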